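/- arXiv:2507.16678 — 3 statements merged into one kernel-verified Lean document; each statement's English description precedes it below -/
import Mathlib

section
/- The function φ(t) = (t-1)·ln(t) - 2(t-1)²/(t+1) is non-negative for all t > 0. -/
open Real

lemma aux_hasDerivAt (x : ℝ) (hx : 0 < x) :
    HasDerivAt (fun t : ℝ => Real.log t - 2 * (t - 1) / (t + 1))
      ((x - 1) ^ 2 / (x * (x + 1) ^ 2)) x := by
  have hx1 : x + 1 ≠ 0 := by linarith
  have h1 : HasDerivAt Real.log x⁻¹ x := Real.hasDerivAt_log hx.ne'
  have hnum : HasDerivAt (fun t : ℝ => 2 * (t - 1)) 2 x := by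
    simpa using ((hasDerivAt_id x).sub_const 1).const_mul 2
  have hden : HasDerivAt (fun t : ℝ => t + 1) 1 x := (hasDerivAt_id x).add_const 1
  have h2 : HasDerivAt (fun t : ℝ => 2 * (t - 1) / (t + 1))
      ((2 * (x + 1) - 2 * (x - 1) * 1) / (x + 1) ^ 2) x := hnum.div hden hx1
  have := h1.sub h2
  refine this.congr_deriv ?_
  field_simp
  ring

lemma key (t : ℝ) (ht : 1 ≤ t) : 2 * (t - 1) / (t + 1) ≤ Real.log t := by
  set f : ℝ → ℝ := fun t => Real.log t - 2 * (t - 1) / (t + 1) with hf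
  have hmono : MonotoneOn f (Set.Ici 1) := by
    apply monotoneOn_of_deriv_nonneg (convex_Ici 1)
    · apply ContinuousOn.sub
      · exact Real.continuousOn_log.mono (by intro x hx; simp at hx ⊢; linarith)
      · apply ContinuousOn.div
        · fun_prop
        · fun_prop
        · intro x hx; simp at hx; intro h; linarith
    · intro x hx
      rw [interior_Ici] at hx
      exact (aux_hasDerivAt x (by simp at hx; linarith)).differentiableAt.differentiableWithinAt
    · intro x hx
      rw [interior_Ici] at hx
      simp only [Set.mem_Ioi] at hx
      have hx0 : 0 < x := by linarith
      rw [(aux_hasDerivAt x hx0).deriv]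
      positivity
  have h1 : f 1 ≤ f t := hmono (by simp) ht ht
  have : f 1 = 0 := by simp [hf]
  have : 0 ≤ f t := by linarith
  simpa [hf, sub_nonneg] using this

theorem stmt_0 (t : ℝ) (ht : 0 < t) :
    0 ≤ (t - 1) * Real.log t - 2 * (t - 1) ^ 2 / (t + 1) := by
  have ht1 : t + 1 ≠ 0 := by linarith
  have hfact : (t - 1) * Real.log t - 2 * (t - 1) ^ 2 / (t + 1)
      = (t - 1) * (Real.log t - 2 * (t - 1) / (t + 1)) := by
    field_simp
  rw [hfact]
  rcases le_or_gt 1 t with h | h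
  · exact mul_nonneg (by linarith) (sub_nonneg.2 (key t h))
  · have hinv : (1 : ℝ) ≤ 1 / t := by
      rw [le_div_iff₀ ht]; linarith
    have hk := key (1 / t) hinv
    rw [Real.log_div one_ne_zero ht.ne', Real.log_one] at hk
    have hlhs : 2 * (1 / t - 1) / (1 / t + 1) = 2 * (1 - t) / (1 + t) := by
      rw [div_eq_div_iff (by positivity) (by linarith)]
      field_simp
    rw [hlhs] at hk
    have hle : Real.log t - 2 * (t - 1) / (t + 1) ≤ 0 := by
      have : 2 * (t - 1) / (t + 1) = -(2 * (1 - t) / (1 + t)) := by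
        field_simp; ring
      rw [this]
      linarith
    have := mul_nonneg (a := -(t-1)) (b := -(Real.log t - 2*(t-1)/(t+1))) (by linarith) (by linarith)
    nlinarith [this]
end

section
/- For all a, b > 0, (a - b)·ln(a/b) ≥ 2(a-b)²/(a+b). -/
lemma log_ge_aux : ∀ t : ℝ, 1 ≤ t → 2 * (t - 1) / (t + 1) ≤ Real.log t := by
  intro t ht
  set g : ℝ → ℝ := fun x => Real.log x - 2 * (x - 1) / (x + 1) with hg
  have hderiv : ∀ x ∈ interior (Set.Ici (1:ℝ)), HasDerivAt g (1/x - 4/(x+1)^2) x := by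
    intro x hx
    rw [interior_Ici] at hx
    have hx0 : (0:ℝ) < x := lt_trans one_pos hx
    have hx1 : x + 1 ≠ 0 := by positivity
    have h1 : HasDerivAt Real.log (1/x) x := by
      simpa [one_div] using Real.hasDerivAt_log hx0.ne'
    have h2 : HasDerivAt (fun x : ℝ => 2 * (x - 1)) 2 x := by
      simpa using ((hasDerivAt_id x).sub_const 1).const_mul 2
    have h3 : HasDerivAt (fun x : ℝ => x + 1) 1 x := (hasDerivAt_id x).add_const 1
    have h4 := h2.div h3 hx1
    have := h1.sub h4
    refine HasDerivAt.congr_deriv this ?_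
    ring
  have hmono : MonotoneOn g (Set.Ici 1) := by
    apply monotoneOn_of_deriv_nonneg (convex_Ici 1)
    · apply ContinuousOn.sub
      · exact Real.continuousOn_log.mono (by
          intro x hx
          simp only [Set.mem_Ici] at hx
          simp only [Set.mem_compl_iff, Set.mem_singleton_iff]
          linarith)
      · apply ContinuousOn.div
        · fun_prop
        · fun_prop
        · intro x hx; simp only [Set.mem_Ici] at hx; positivity
    · intro x hx
      rw [interior_Ici] at hx
      exact (hderiv x (by rw [interior_Ici]; exact hx)).differentiableAt.differentiableWithinAt
    · intro x hx
      rw [(hderiv x hx).deriv]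
      rw [interior_Ici] at hx
      have hx0 : (0:ℝ) < x := lt_trans one_pos hx
      rw [sub_nonneg, div_le_div_iff₀ (by positivity) hx0]
      nlinarith [sq_nonneg (x - 1)]
  have := hmono (Set.self_mem_Ici) (Set.mem_Ici.mpr ht) ht
  simp only [hg, Real.log_one] at this
  linarith

lemma log_ratio_ge (a b : ℝ) (ha : 0 < a) (hb : 0 < b) (hab : b ≤ a) :
    2 * (a - b) / (a + b) ≤ Real.log (a / b) := by
  have ht : 1 ≤ a / b := (one_le_div hb).mpr hab
  have := log_ge_aux (a / b) ht
  have key : 2 * (a / b - 1) / (a / b + 1) = 2 * (a - b) / (a + b) := by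
    field_simp
  rwa [key] at this

theorem stmt_1 (a b : ℝ) (ha : 0 < a) (hb : 0 < b) :
    (a - b) * Real.log (a / b) ≥ 2 * (a - b) ^ 2 / (a + b) := by
  rcases le_total b a with h | h
  · have hlog := log_ratio_ge a b ha hb h
    have hab : 0 ≤ a - b := by linarith
    have habp : 0 < a + b := by linarith
    rw [ge_iff_le, div_le_iff₀ habp]
    rw [div_le_iff₀ habp] at hlog
    nlinarith [mul_le_mul_of_nonneg_left hlog hab]
  · have hlog := log_ratio_ge b a hb ha h
    have hab : 0 ≤ b - a := by linarith
    have habp : 0 < a + b := by linarith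
    have hswap : Real.log (a / b) = - Real.log (b / a) := by
      rw [← Real.log_inv, inv_div]
    rw [ge_iff_le, div_le_iff₀ habp, hswap]
    rw [div_le_iff₀ (by linarith : (0:ℝ) < b + a)] at hlog
    nlinarith [mul_le_mul_of_nonneg_left hlog hab]
end

section
/- Let F, G ∈ ℝ^T be vectors in the interior of the probability simplex (all entries strictly positive, summing to 1). Then ∑_j (f_j - g_j)·ln(f_j/g_j) ≥ ∑_j 2(f_j - g_j)²/(f_j + g_j). -/
/-- The auxiliary function `ψ x = log x - 2(x-1)/(x+1)` is monotone on `(0, ∞)`. -/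
lemma psi_mono : MonotoneOn (fun x : ℝ => Real.log x - 2 * (x - 1) / (x + 1)) (Set.Ioi 0) := by
  have hderiv : ∀ x ∈ interior (Set.Ioi (0:ℝ)),
      HasDerivAt (fun x : ℝ => Real.log x - 2 * (x - 1) / (x + 1))
        (1 / x - 4 / (x + 1) ^ 2) x := by
    intro x hx
    rw [interior_Ioi] at hx
    have hx0 : (0:ℝ) < x := hx
    have hx1 : x + 1 ≠ 0 := by positivity
    have h1 : HasDerivAt Real.log (1 / x) x := by
      simpa [one_div] using Real.hasDerivAt_log hx0.ne'
    have h2 : HasDerivAt (fun x : ℝ => 2 * (x - 1) / (x + 1)) (4 / (x + 1) ^ 2) x := by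
      have hu : HasDerivAt (fun x : ℝ => 2 * (x - 1)) 2 x := by
        simpa using ((hasDerivAt_id x).sub_const 1).const_mul 2
      have hv : HasDerivAt (fun x : ℝ => x + 1) 1 x := (hasDerivAt_id x).add_const 1
      have := hu.div hv hx1
      exact this.congr_deriv (by ring)
    exact h1.sub h2
  apply monotoneOn_of_deriv_nonneg (convex_Ioi 0)
  · apply ContinuousOn.sub
    · exact Real.continuousOn_log.mono (by intro x hx; exact ne_of_gt hx)
    · apply ContinuousOn.div
      · fun_prop
      · fun_prop
      · intro x hx; have : (0:ℝ) < x := hx; positivity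
  · intro x hx
    exact (hderiv x hx).differentiableAt.differentiableWithinAt
  · intro x hx
    rw [(hderiv x hx).deriv]
    rw [interior_Ioi] at hx
    have hx0 : (0:ℝ) < x := hx
    rw [sub_nonneg, div_le_div_iff₀ (by positivity) hx0]
    nlinarith [sq_nonneg (x - 1)]

/-- Pointwise inequality: `(x-1) log x ≥ 2(x-1)²/(x+1)` for `x > 0`. -/
lemma key_ineq {x : ℝ} (hx : 0 < x) :
    2 * (x - 1) ^ 2 / (x + 1) ≤ (x - 1) * Real.log x := by
  have hx1 : (0:ℝ) < x + 1 := by linarith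
  have key : 0 ≤ (x - 1) * (Real.log x - 2 * (x - 1) / (x + 1)) := by
    rcases le_total 1 x with h | h
    · have := psi_mono (Set.mem_Ioi.mpr one_pos) (Set.mem_Ioi.mpr hx) h
      simp only [Real.log_one] at this
      have h0 : (0:ℝ) ≤ Real.log x - 2 * (x - 1) / (x + 1) := by
        have : ((0:ℝ) - 2 * (1 - 1) / (1 + 1)) ≤ Real.log x - 2 * (x - 1) / (x + 1) := this
        linarith [this]
      exact mul_nonneg (by linarith) h0
    · have := psi_mono (Set.mem_Ioi.mpr hx) (Set.mem_Ioi.mpr one_pos) h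
      simp only [Real.log_one] at this
      have h0 : Real.log x - 2 * (x - 1) / (x + 1) ≤ 0 := by
        have : Real.log x - 2 * (x - 1) / (x + 1) ≤ ((0:ℝ) - 2 * (1 - 1) / (1 + 1)) := this
        linarith [this]
      nlinarith [h0]
  have hexp : (x - 1) * (2 * (x - 1) / (x + 1)) = 2 * (x - 1) ^ 2 / (x + 1) := by
    field_simp
    try ring
  nlinarith [key]

theorem stmt_2 (T : ℕ) (F G : Fin T → ℝ)
    (hF : ∀ j, 0 < F j) (hG : ∀ j, 0 < G j)
    (hFsum : ∑ j, F j = 1) (hGsum : ∑ j, G j = 1) :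
    ∑ j, (F j - G j) * Real.log (F j / G j) ≥
      ∑ j, 2 * (F j - G j) ^ 2 / (F j + G j) := by
  apply Finset.sum_le_sum
  intro j _
  have hf := hF j
  have hg := hG j
  set f := F j
  set g := G j
  have hx : 0 < f / g := div_pos hf hg
  have h := key_ineq hx
  have e1 : (f / g - 1) * Real.log (f / g) * g = (f - g) * Real.log (f / g) := by
    field_simp
    try ring
  have e2 : 2 * (f / g - 1) ^ 2 / (f / g + 1) * g = 2 * (f - g) ^ 2 / (f + g) := by
    rw [div_mul_eq_mul_div, div_eq_div_iff (by positivity) (by positivity)]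
    field_simp
    try ring
  calc 2 * (f - g) ^ 2 / (f + g) = 2 * (f / g - 1) ^ 2 / (f / g + 1) * g := e2.symm
    _ ≤ (f / g - 1) * Real.log (f / g) * g :=
        mul_le_mul_of_nonneg_right h hg.le
    _ = (f - g) * Real.log (f / g) := e1
end
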